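/- Let n ∈ ℤ^d_{>0} be a velocity vector. Then the minimum of ca(Z(n), w) over all interior lattice points w ∈ int(Z(n)) ∩ ℤ^d equals 1/gap(n) − 1, where gap(n) := max_{β ∈ ℝ} min_{1≤i≤d} ‖β n_i‖_ℤ. -/

import Mathlib

open Pointwise

/-- The coefficient of asymmetry of a point `w` in a convex set `K`:
`ca(K,w) = min{λ ≥ 1 : w − K ⊆ λ(K − w)}`. -/
noncomputable def ca {E : Type*} [AddCommGroup E] [Module ℝ E] (K : Set E) (w : E) : ℝ :=
  sInf {l : ℝ | 1 ≤ l ∧ ({w} : Set E) - K ⊆ l • (K - {w})}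

/-- A point of `ℝ^d` all of whose coordinates are integers. -/
def IsLatticePoint {d : ℕ} (x : Fin d → ℝ) : Prop := ∀ i, ∃ z : ℤ, x i = (z : ℝ)

/-- The distance from a real number to the nearest integer. -/
noncomputable def distToInt (x : ℝ) : ℝ := |x - round x|

/-! ### Auxiliary lemmas about `distToInt` -/

lemma distToInt_nonneg (x : ℝ) : 0 ≤ distToInt x := abs_nonneg _

lemma distToInt_le_half (x : ℝ) : distToInt x ≤ 1/2 := abs_sub_round x

lemma distToInt_le (x : ℝ) (m : ℤ) : distToInt x ≤ |x - m| := round_le x m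

lemma distToInt_add_int (x : ℝ) (m : ℤ) : distToInt (x + m) = distToInt x := by
  unfold distToInt; rw [round_add_intCast]; push_cast; ring_nf

lemma distToInt_ge {x μ : ℝ} (k : ℤ) (h1 : (k:ℝ) + μ ≤ x) (h2 : x ≤ (k:ℝ) + 1 - μ) :
    μ ≤ distToInt x := by
  have ha := le_abs_self (x - (round x : ℝ))
  have hb := neg_abs_le (x - (round x : ℝ))
  rcases le_or_gt (round x) k with h | h
  · have : (round x : ℝ) ≤ k := by exact_mod_cast h
    unfold distToInt; linarith
  · have : ((k:ℤ)+1 : ℝ) ≤ (round x : ℝ) := by exact_mod_cast h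
    unfold distToInt; push_cast at this; linarith

lemma distToInt_lipschitz (x y : ℝ) : distToInt x ≤ distToInt y + |x - y| := by
  calc distToInt x ≤ |x - round y| := distToInt_le x (round y)
  _ = |(x-y) + (y - round y)| := by ring_nf
  _ ≤ |x - y| + |y - round y| := abs_add_le _ _
  _ = distToInt y + |x - y| := by rw [add_comm]; rfl

lemma continuous_distToInt : Continuous distToInt := by
  rw [Metric.continuous_iff]
  intro x ε hε
  exact ⟨ε, hε, fun y hy => by
    rw [Real.dist_eq] at *
    have h1 := distToInt_lipschitz y x
    have h2 := distToInt_lipschitz x y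
    rw [abs_sub_comm] at h2
    rw [abs_lt]; constructor <;> nlinarith [abs_nonneg (y - x)]⟩

lemma distToInt_pos_of_irrational {x : ℝ} (hx : Irrational x) : 0 < distToInt x := by
  rcases (distToInt_nonneg x).lt_or_eq with h | h
  · exact h
  · exfalso
    have : x = (round x : ℝ) := by
      have := abs_eq_zero.mp h.symm; linarith
    exact hx ⟨(round x : ℚ), by push_cast; linarith⟩

/-! ### The supremum defining the gap of loneliness is attained -/

section GapAux
variable {d : ℕ} (hd : 2 ≤ d) (n : Fin d → ℤ) (hpos : ∀ i, 0 < n i)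

include hd hpos in
lemma gap_attained :
    ∃ β : ℝ, 0 < (⨅ i, distToInt (β * (n i:ℝ)))
      ∧ (⨅ i, distToInt (β * (n i:ℝ))) = ⨆ β : ℝ, ⨅ i, distToInt (β * (n i:ℝ)) := by
  haveI : NeZero d := ⟨by omega⟩
  set f : ℝ → ℝ := fun β => ⨅ i, distToInt (β * (n i:ℝ)) with hf
  have hfin : ∀ β, f β = Finset.univ.inf' Finset.univ_nonempty
      (fun i => distToInt (β * (n i:ℝ))) := fun β =>
    (Finset.inf'_univ_eq_ciInf _).symm
  have hcont : Continuous f := by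
    have : Continuous (fun β : ℝ => Finset.univ.inf' (Finset.univ_nonempty (α := Fin d))
        (fun i => distToInt (β * (n i:ℝ)))) := by
      apply Continuous.finset_inf'_apply
      intro i _
      exact continuous_distToInt.comp (continuous_id.mul continuous_const)
    exact this.congr fun β => (hfin β).symm
  have hper : ∀ (β : ℝ) (m : ℤ), f (β + m) = f β := by
    intro β m
    simp only [hf]
    congr 1; funext i
    have : (β + (m:ℝ)) * (n i : ℝ) = β * n i + ((m * n i : ℤ) : ℝ) := by push_cast; ring
    rw [this, distToInt_add_int]
  obtain ⟨β0, hβ0mem, hmax⟩ := (isCompact_Icc (a := (0:ℝ)) (b := 1)).exists_isMaxOn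
    ⟨0, by norm_num⟩ hcont.continuousOn
  have hub : ∀ β, f β ≤ f β0 := by
    intro β
    have h1 : f β = f (Int.fract β) := by
      calc f β = f (Int.fract β + (⌊β⌋:ℤ)) := by rw [Int.fract_add_floor]
      _ = f (Int.fract β) := hper _ _
    rw [h1]
    exact hmax ⟨Int.fract_nonneg β, (Int.fract_lt_one β).le⟩
  have hgap : f β0 = ⨆ β : ℝ, f β :=
    le_antisymm (le_ciSup ⟨f β0, by rintro x ⟨β, rfl⟩; exact hub β⟩ β0) (ciSup_le hub)
  have hpos2 : 0 < f β0 := by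
    have h2 : 0 < f (Real.sqrt 2) := by
      obtain ⟨i, hi⟩ := exists_eq_ciInf_of_finite
        (f := fun i : Fin d => distToInt (Real.sqrt 2 * (n i:ℝ)))
      have hfr : f (Real.sqrt 2) = ⨅ i, distToInt (Real.sqrt 2 * (n i:ℝ)) := rfl
      rw [hfr, ← hi]
      apply distToInt_pos_of_irrational
      rw [mul_comm]
      exact irrational_sqrt_two.intCast_mul (hpos i).ne'
    exact lt_of_lt_of_le h2 (hub _)
  exact ⟨β0, hpos2, hgap⟩
end GapAux

/-! ### Geometry of the lonely runner zonohedron -/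

section GeomAux
variable {d : ℕ} [NeZero d] {v : Fin d → ℝ} (hv : ∀ i, 0 < v i)
  {Z : Set (Fin d → ℝ)}
  (hZ : Z = (Set.range fun t : ℝ => t • v) + Set.Icc (0 : Fin d → ℝ) 1)

include hZ in
lemma mem_Z_iff (x : Fin d → ℝ) :
    x ∈ Z ↔ ∃ t : ℝ, ∀ i, 0 ≤ x i - t * v i ∧ x i - t * v i ≤ 1 := by
  subst hZ
  constructor
  · rintro ⟨a, ⟨t, rfl⟩, u, hu, rfl⟩
    refine ⟨t, fun i => ?_⟩
    have h0 : (0 : Fin d → ℝ) ≤ u := hu.1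
    have h1 : u ≤ 1 := hu.2
    have := h0 i
    have := h1 i
    simp only [Pi.add_apply, Pi.smul_apply, smul_eq_mul, Pi.zero_apply, Pi.one_apply] at *
    constructor <;> linarith
  · rintro ⟨t, ht⟩
    refine ⟨t • v, ⟨t, rfl⟩, fun i => x i - t * v i, ⟨fun i => (ht i).1, fun i => (ht i).2⟩, ?_⟩
    funext i; simp [mul_comm]

include hv hZ in
lemma feasible_iff (w : Fin d → ℝ) (l : ℝ) (hl : 1 ≤ l) :
    (({w} : Set (Fin d → ℝ)) - Z ⊆ l • (Z - {w})) ↔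
      ∀ i k, v i + v k ≤ (1 + l) * (v i * w k - v k * w i + v k) := by
  have hl0 : 0 < l := by linarith
  constructor
  · intro hsub i k
    rcases eq_or_ne i k with rfl | hik
    · nlinarith [hv i]
    · set u : Fin d → ℝ := fun j => if j = k then 1 else 0 with hu
      have hmem : w - u ∈ ({w} : Set (Fin d → ℝ)) - Z := by
        refine ⟨w, rfl, u, ?_, rfl⟩
        rw [mem_Z_iff hZ]
        exact ⟨0, fun j => by by_cases h : j = k <;> simp [hu, h]⟩
      obtain ⟨y, ymem, hy⟩ := hsub hmem
      obtain ⟨z, hz, w2, hw2, hzw⟩ := ymem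
      have hw2' : w = w2 := (Set.eq_of_mem_singleton hw2).symm
      subst hw2'
      rw [mem_Z_iff hZ] at hz
      obtain ⟨t, ht⟩ := hz
      have hcoord : ∀ j, w j - u j = l * (z j - w j) := by
        intro j
        have : l • y = w - u := hy
        rw [← hzw] at this
        have := congrFun this j
        simpa using this.symm
      have hci := hcoord i; have hck := hcoord k
      simp only [hu, if_pos rfl, if_neg hik] at hci hck
      have e1 : l * z i = (1 + l) * w i := by nlinarith [hci]
      have e2 : l * z k = (1 + l) * w k - 1 := by nlinarith [hck]
      have h1 : z i ≤ t * v i + 1 := by linarith [(ht i).2]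
      have h2 : t * v k ≤ z k := by linarith [(ht k).1]
      have h1' : l * z i ≤ l * (t * v i + 1) := mul_le_mul_of_nonneg_left h1 hl0.le
      have h2' : l * (t * v k) ≤ l * z k := mul_le_mul_of_nonneg_left h2 hl0.le
      have h3 : (1 + l) * w i ≤ l * (t * v i) + l := by nlinarith [e1, h1']
      have h4 : l * (t * v k) ≤ (1 + l) * w k - 1 := by nlinarith [e2, h2']
      have h5 := mul_le_mul_of_nonneg_right h3 (hv k).le
      have h6 := mul_le_mul_of_nonneg_right h4 (hv i).le
      nlinarith [h5, h6]
  · intro H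
    rintro p ⟨w2, hw2, z, hz, rfl⟩
    have hw2' : w = w2 := (Set.eq_of_mem_singleton hw2).symm
    subst hw2'
    rw [mem_Z_iff hZ] at hz
    obtain ⟨t, ht⟩ := hz
    set u : Fin d → ℝ := fun j => z j - t * v j with hu
    have hu0 : ∀ j, 0 ≤ u j := fun j => (ht j).1
    have hu1 : ∀ j, u j ≤ 1 := fun j => (ht j).2
    set A : Fin d → ℝ := fun j => ((1 + l) * w j - u j - l) / (l * v j) with hA
    set B : Fin d → ℝ := fun j => ((1 + l) * w j - u j) / (l * v j) with hB
    have hAB : ∀ j m, A j ≤ B m := by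
      intro j m
      rw [hA, hB, div_le_div_iff₀ (mul_pos hl0 (hv j)) (mul_pos hl0 (hv m))]
      have hH := H j m
      have key : ((1 + l) * w j - u j - l) * v m ≤ ((1 + l) * w m - u m) * v j := by
        nlinarith [mul_nonneg (hu0 j) (hv m).le,
          mul_le_mul_of_nonneg_right (hu1 m) (hv j).le]
      calc ((1 + l) * w j - u j - l) * (l * v m)
          = l * (((1 + l) * w j - u j - l) * v m) := by ring
        _ ≤ l * (((1 + l) * w m - u m) * v j) := mul_le_mul_of_nonneg_left key hl0.le
        _ = ((1 + l) * w m - u m) * (l * v j) := by ring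
    set σ : ℝ := ⨆ j, A j with hσ
    have hσA : ∀ j, A j ≤ σ := fun j =>
      le_ciSup (Set.Finite.bddAbove (Set.finite_range A)) j
    have hσB : ∀ j, σ ≤ B j := fun j => ciSup_le fun m => hAB m j
    set z' : Fin d → ℝ := fun j => (-(t / l) + σ) * v j + (((1 + l) * w j - u j) / l - σ * v j)
      with hz'
    refine ⟨z' - w, ⟨z', ?_, w, rfl, rfl⟩, ?_⟩
    · rw [mem_Z_iff hZ]
      refine ⟨-(t / l) + σ, fun j => ?_⟩
      have e : z' j - (-(t / l) + σ) * v j = ((1 + l) * w j - u j) / l - σ * v j := by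
        rw [hz']; ring
      rw [e]
      have hBj := hσB j; have hAj := hσA j
      rw [hB, le_div_iff₀ (mul_pos hl0 (hv j))] at hBj
      rw [hA, div_le_iff₀ (mul_pos hl0 (hv j))] at hAj
      constructor
      · rw [sub_nonneg, le_div_iff₀ hl0]
        nlinarith [hBj]
      · rw [sub_le_iff_le_add, div_le_iff₀ hl0]
        nlinarith [hAj]
    · funext j
      have hzj : z j = t * v j + u j := by rw [hu]; ring
      simp only [Pi.smul_apply, Pi.sub_apply, smul_eq_mul]
      rw [hz', hzj]
      field_simp
      ring

include hv hZ in
lemma ca_eq (w : Fin d → ℝ) (hN : ∀ i k, 0 < v i * w k - v k * w i + v k) :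
    ca Z w =
      (⨆ p : Fin d × Fin d, (v p.1 + v p.2) / (v p.1 * w p.2 - v p.2 * w p.1 + v p.2)) - 1 := by
  set F : Fin d × Fin d → ℝ :=
    fun p => (v p.1 + v p.2) / (v p.1 * w p.2 - v p.2 * w p.1 + v p.2) with hF
  set Λ : ℝ := ⨆ p, F p with hΛ
  have hbd : BddAbove (Set.range F) := Set.Finite.bddAbove (Set.finite_range F)
  have hΛ2 : 2 ≤ Λ := by
    have i : Fin d := ⟨0, Nat.pos_of_ne_zero (NeZero.ne d)⟩
    have hFi : F ⟨i, i⟩ = 2 := by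
      show (v i + v i) / (v i * w i - v i * w i + v i) = 2
      rw [show v i * w i - v i * w i + v i = v i from by ring, div_eq_iff (hv i).ne']
      ring
    calc (2:ℝ) = F ⟨i,i⟩ := hFi.symm
    _ ≤ Λ := le_ciSup hbd _
  have hset : {l : ℝ | 1 ≤ l ∧ ({w} : Set (Fin d → ℝ)) - Z ⊆ l • (Z - {w})}
      = Set.Ici (Λ - 1) := by
    ext l
    simp only [Set.mem_setOf_eq, Set.mem_Ici]
    constructor
    · rintro ⟨hl, hc⟩
      rw [feasible_iff hv hZ w l hl] at hc
      have hle : ∀ p : Fin d × Fin d, F p ≤ 1 + l := by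
        intro p
        rw [hF, div_le_iff₀ (hN p.1 p.2)]
        linarith [hc p.1 p.2]
      have := ciSup_le hle
      linarith
    · intro hl
      have hl1 : 1 ≤ l := by linarith
      refine ⟨hl1, ?_⟩
      rw [feasible_iff hv hZ w l hl1]
      intro i k
      have h : F ⟨i, k⟩ ≤ Λ := le_ciSup hbd _
      rw [hF, div_le_iff₀ (hN i k)] at h
      have h2 : Λ * (v i * w k - v k * w i + v k) ≤ (1 + l) * (v i * w k - v k * w i + v k) :=
        mul_le_mul_of_nonneg_right (by linarith) (hN i k).le
      linarith
  rw [ca, hset, csInf_Ici]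

include hv hZ in
lemma N_pos_of_interior (w : Fin d → ℝ) (hw : w ∈ interior Z) :
    ∀ i k, 0 < v i * w k - v k * w i + v k := by
  intro i k
  rcases eq_or_ne i k with rfl | hik
  · rw [show v i * w i - v i * w i + v i = v i from by ring]; exact hv i
  · rw [mem_interior_iff_mem_nhds, Metric.mem_nhds_iff] at hw
    obtain ⟨ε, hε, hball⟩ := hw
    set w' : Fin d → ℝ := fun j => if j = i then w i + ε / 2 else w j with hw'def
    have hmem : w' ∈ Metric.ball w ε := by
      rw [Metric.mem_ball, dist_pi_lt_iff hε]
      intro j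
      by_cases h : j = i
      · subst h
        simp only [hw'def, if_pos rfl, Real.dist_eq]
        rw [show w j + ε / 2 - w j = ε / 2 from by ring, abs_of_pos (half_pos hε)]
        linarith
      · simp [hw'def, h, hε]
    have hw' : w' ∈ Z := hball hmem
    rw [mem_Z_iff hZ] at hw'
    obtain ⟨t, ht⟩ := hw'
    have h1 : w i + ε / 2 - t * v i ≤ 1 := by
      have := (ht i).2; simp only [hw'def, if_pos rfl] at this; linarith
    have h2 : 0 ≤ w k - t * v k := by
      have := (ht k).1; simp only [hw'def, if_neg (Ne.symm hik)] at this; linarith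
    have h3 := mul_le_mul_of_nonneg_left h1 (hv k).le
    have h4 := mul_nonneg (hv i).le h2
    nlinarith [h3, h4, mul_pos (half_pos hε) (hv k)]

include hv in
lemma exists_good_beta (w : Fin d → ℝ) (hlat : ∀ i, ∃ z : ℤ, w i = (z : ℝ)) :
    ∃ β : ℝ, ∀ i,
      (⨅ p : Fin d × Fin d, (v p.1 * w p.2 - v p.2 * w p.1 + v p.2) / (v p.1 + v p.2))
        ≤ distToInt (β * v i) := by
  set G : Fin d × Fin d → ℝ :=
    fun p => (v p.1 * w p.2 - v p.2 * w p.1 + v p.2) / (v p.1 + v p.2) with hG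
  set M : ℝ := ⨅ p, G p with hM
  have hbd : BddBelow (Set.range G) := Set.Finite.bddBelow (Set.finite_range G)
  set β : ℝ := ⨆ j, (w j - 1 + M) / v j with hβ
  have key : ∀ j i, (w j - 1 + M) / v j ≤ (w i - M) / v i := by
    intro j i
    rw [div_le_div_iff₀ (hv j) (hv i)]
    have h : M ≤ G ⟨j, i⟩ := ciInf_le hbd _
    rw [hG, le_div_iff₀ (add_pos (hv j) (hv i))] at h
    nlinarith [h]
  have hβ1 : ∀ i, (w i - 1 + M) / v i ≤ β := fun i =>
    le_ciSup (f := fun j => (w j - 1 + M) / v j)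
      (Set.Finite.bddAbove (Set.finite_range _)) i
  have hβ2 : ∀ i, β ≤ (w i - M) / v i := fun i => ciSup_le fun j => key j i
  refine ⟨β, fun i => ?_⟩
  obtain ⟨zi, hzi⟩ := hlat i
  apply distToInt_ge (zi - 1)
  · have := hβ1 i
    rw [div_le_iff₀ (hv i)] at this
    push_cast
    rw [← hzi]
    linarith
  · have := hβ2 i
    rw [le_div_iff₀ (hv i)] at this
    push_cast
    rw [← hzi]
    linarith

include hv in
lemma one_div_gap_le (w : Fin d → ℝ) (hlat : ∀ i, ∃ z : ℤ, w i = (z : ℝ))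
    (hN : ∀ i k, 0 < v i * w k - v k * w i + v k) (g : ℝ) (hg : 0 < g)
    (hgub : ∀ β : ℝ, (⨅ i, distToInt (β * v i)) ≤ g) :
    1/g ≤ ⨆ p : Fin d × Fin d,
      (v p.1 + v p.2) / (v p.1 * w p.2 - v p.2 * w p.1 + v p.2) := by
  set G : Fin d × Fin d → ℝ :=
    fun p => (v p.1 * w p.2 - v p.2 * w p.1 + v p.2) / (v p.1 + v p.2) with hG
  set M : ℝ := ⨅ p, G p with hM
  obtain ⟨β, hβ⟩ := exists_good_beta hv w hlat
  have hM_le : M ≤ g := le_trans (le_ciInf hβ) (hgub β)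
  obtain ⟨p0, hp0⟩ := exists_eq_ciInf_of_finite (f := G)
  have hGpos : 0 < G p0 := div_pos (hN p0.1 p0.2) (add_pos (hv p0.1) (hv p0.2))
  have hMpos : 0 < M := by rw [hM, ← hp0]; exact hGpos
  calc 1/g ≤ 1/M := one_div_le_one_div_of_le hMpos hM_le
  _ = (v p0.1 + v p0.2) / (v p0.1 * w p0.2 - v p0.2 * w p0.1 + v p0.2) := by
      rw [hM, ← hp0, hG, one_div_div]
  _ ≤ _ := le_ciSup
      (f := fun p : Fin d × Fin d =>
        (v p.1 + v p.2) / (v p.1 * w p.2 - v p.2 * w p.1 + v p.2))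
      (Set.Finite.bddAbove (Set.finite_range _)) p0
end GeomAux

theorem ca_gap_relation
    {d : ℕ} (hd : 2 ≤ d) (n : Fin d → ℤ) (hpos : ∀ i, 0 < n i)
    (hdist : Function.Injective n) (hgcd : Finset.univ.gcd n = 1)
    (Z : Set (Fin d → ℝ))
    (hZ : Z = (Set.range fun t : ℝ => t • (fun i => (n i : ℝ))) + Set.Icc (0 : Fin d → ℝ) 1)
    (gap : ℝ) (hgap : gap = ⨆ β : ℝ, ⨅ i, distToInt (β * (n i : ℝ))) :
    IsLeast {r : ℝ | ∃ w : Fin d → ℝ, w ∈ interior Z ∧ IsLatticePoint w ∧ r = ca Z w}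
      (1 / gap - 1) := by
  haveI : NeZero d := ⟨by omega⟩
  have i0 : Fin d := ⟨0, by omega⟩
  have hv : ∀ i, (0:ℝ) < (fun i => (n i : ℝ)) i := fun i => by
    simp only []; exact_mod_cast hpos i
  have hbddf : ∀ β : ℝ, BddBelow (Set.range fun i => distToInt (β * (n i : ℝ))) :=
    fun β => ⟨0, by rintro x ⟨i, rfl⟩; exact distToInt_nonneg _⟩
  have hbddgap : BddAbove (Set.range fun β : ℝ => ⨅ i, distToInt (β * (n i : ℝ))) := by
    refine ⟨1/2, ?_⟩
    rintro x ⟨β, rfl⟩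
    exact le_trans (ciInf_le (hbddf β) i0) (distToInt_le_half _)
  have hgub : ∀ β : ℝ, (⨅ i, distToInt (β * (n i : ℝ))) ≤ gap := by
    intro β; rw [hgap]; exact le_ciSup hbddgap β
  obtain ⟨βs, hβs_pos, hβs_eq⟩ := gap_attained hd n hpos
  have hgap_eq : gap = ⨅ i, distToInt (βs * (n i : ℝ)) := by rw [hgap, ← hβs_eq]
  have hgap0 : 0 < gap := hgap_eq ▸ hβs_pos
  have hgapd : ∀ i, gap ≤ distToInt (βs * (n i : ℝ)) := fun i =>
    hgap_eq ▸ ciInf_le (hbddf βs) i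
  have hgap_half : gap ≤ 1/2 := le_trans (hgapd i0) (distToInt_le_half _)
  -- the optimal lattice point
  set W : Fin d → ℝ := fun i => ((⌈βs * (n i : ℝ)⌉ : ℤ) : ℝ) with hW
  have hc1 : ∀ i, gap ≤ W i - βs * (n i : ℝ) := by
    intro i
    have h1 := distToInt_le (βs * (n i : ℝ)) ⌈βs * (n i : ℝ)⌉
    rw [abs_of_nonpos (by linarith [Int.le_ceil (βs * (n i : ℝ))])] at h1
    have := hgapd i
    simp only [hW]
    linarith
  have hc2 : ∀ i, W i - βs * (n i : ℝ) ≤ 1 - gap := by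
    intro i
    have h1 := distToInt_le (βs * (n i : ℝ)) (⌈βs * (n i : ℝ)⌉ - 1)
    have h2 : ((⌈βs * (n i : ℝ)⌉ - 1 : ℤ) : ℝ) ≤ βs * (n i : ℝ) := by
      push_cast
      linarith [Int.ceil_lt_add_one (βs * (n i : ℝ))]
    rw [abs_of_nonneg (by linarith)] at h1
    have := hgapd i
    simp only [hW]
    push_cast at h1 ⊢
    linarith
  have hWlat : IsLatticePoint W := fun i => ⟨⌈βs * (n i : ℝ)⌉, rfl⟩
  have hWint : W ∈ interior Z := by
    have hU : IsOpen (Set.univ.pi fun i => Set.Ioo (βs * (n i : ℝ)) (βs * (n i : ℝ) + 1)) :=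
      isOpen_set_pi Set.finite_univ fun i _ => isOpen_Ioo
    have hWU : W ∈ Set.univ.pi fun i => Set.Ioo (βs * (n i : ℝ)) (βs * (n i : ℝ) + 1) := by
      intro i _
      constructor
      · have := hc1 i; linarith
      · have := hc2 i; linarith
    have hUZ : (Set.univ.pi fun i => Set.Ioo (βs * (n i : ℝ)) (βs * (n i : ℝ) + 1)) ⊆ Z := by
      intro x hx
      rw [mem_Z_iff hZ]
      refine ⟨βs, fun i => ?_⟩
      have := hx i (Set.mem_univ i)
      exact ⟨by linarith [this.1], by linarith [this.2]⟩
    exact interior_maximal hUZ hU hWU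
  have hNW := N_pos_of_interior hv hZ W hWint
  constructor
  · refine ⟨W, hWint, hWlat, ?_⟩
    rw [ca_eq hv hZ W hNW]
    have hle : (⨆ p : Fin d × Fin d,
        ((n p.1 : ℝ) + (n p.2 : ℝ)) / ((n p.1 : ℝ) * W p.2 - (n p.2 : ℝ) * W p.1 + (n p.2 : ℝ)))
        ≤ 1/gap := by
      apply ciSup_le
      intro p
      rw [div_le_div_iff₀ (hNW p.1 p.2) hgap0]
      have a1 := mul_le_mul_of_nonneg_left (hc1 p.2) (hv p.1).le
      have a2 := mul_le_mul_of_nonneg_left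
        (show gap ≤ 1 - (W p.1 - βs * (n p.1 : ℝ)) from by linarith [hc2 p.1]) (hv p.2).le
      simp only [] at a1 a2
      nlinarith [a1, a2]
    have hge := one_div_gap_le hv W hWlat hNW gap hgap0 hgub
    have : (⨆ p : Fin d × Fin d,
        ((n p.1 : ℝ) + (n p.2 : ℝ)) / ((n p.1 : ℝ) * W p.2 - (n p.2 : ℝ) * W p.1 + (n p.2 : ℝ)))
        = 1/gap := le_antisymm hle hge
    rw [show (⨆ p : Fin d × Fin d, ((fun i => (n i : ℝ)) p.1 + (fun i => (n i : ℝ)) p.2) /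
        ((fun i => (n i : ℝ)) p.1 * W p.2 - (fun i => (n i : ℝ)) p.2 * W p.1 +
          (fun i => (n i : ℝ)) p.2)) = 1/gap from this]
  · rintro r ⟨w, hwint, hwlat, rfl⟩
    have hNw := N_pos_of_interior hv hZ w hwint
    rw [ca_eq hv hZ w hNw]
    have hge := one_div_gap_le hv w hwlat hNw gap hgap0 hgub
    have h' : 1/gap ≤ ⨆ p : Fin d × Fin d,
        ((fun i => (n i : ℝ)) p.1 + (fun i => (n i : ℝ)) p.2) /
        ((fun i => (n i : ℝ)) p.1 * w p.2 - (fun i => (n i : ℝ)) p.2 * w p.1 +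
          (fun i => (n i : ℝ)) p.2) := hge
    linarith
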